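/- Let A ∈ M₂(ℝ) with A ≠ 0 and det A = 0, and let a₀ > 0. Then the equation X² + a₀I = A has no solution X ∈ M₂(ℝ). -/
import Mathlib


theorem stmt_16 (A : Matrix (Fin 2) (Fin 2) ℝ) (hA : A ≠ 0) (hdet : A.det = 0)
    (a₀ : ℝ) (h : 0 < a₀) :
    ¬ ∃ X : Matrix (Fin 2) (Fin 2) ℝ, X ^ 2 + a₀ • (1 : Matrix (Fin 2) (Fin 2) ℝ) = A := by
  rintro ⟨X, hX⟩
  subst hX
  rw [Matrix.det_fin_two] at hdet
  have e : ∀ i j, (X ^ 2 + a₀ • (1 : Matrix (Fin 2) (Fin 2) ℝ)) i j =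
      (X * X) i j + a₀ • (1 : Matrix (Fin 2) (Fin 2) ℝ) i j := by
    intro i j; rw [pow_two]; rfl
  simp only [e, Matrix.mul_apply, Fin.sum_univ_two, Matrix.smul_apply, Matrix.one_apply,
    smul_eq_mul] at hdet
  norm_num at hdet
  have key : (X 0 0 * X 1 1 - X 0 1 * X 1 0 - a₀) ^ 2 + a₀ * (X 0 0 + X 1 1) ^ 2 = 0 := by
    nlinarith [hdet]
  have hsq : (X 0 0 + X 1 1) ^ 2 ≤ 0 := by
    nlinarith [sq_nonneg (X 0 0 * X 1 1 - X 0 1 * X 1 0 - a₀)]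
  have h1 : X 0 0 + X 1 1 = 0 := by
    have := le_antisymm hsq (sq_nonneg _)
    exact pow_eq_zero_iff (two_ne_zero) |>.mp this
  have h2 : X 0 0 * X 1 1 - X 0 1 * X 1 0 - a₀ = 0 := by
    have : (X 0 0 * X 1 1 - X 0 1 * X 1 0 - a₀) ^ 2 = 0 := by
      rw [h1] at key; linarith [key]
    exact pow_eq_zero_iff (two_ne_zero) |>.mp this
  apply hA
  ext i j
  fin_cases i <;> fin_cases j <;>
    simp only [e, Matrix.mul_apply, Fin.sum_univ_two, Matrix.smul_apply, Matrix.one_apply,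
      smul_eq_mul, Matrix.zero_apply] <;> norm_num
  · linear_combination X 0 0 * h1 - h2
  · linear_combination X 0 1 * h1
  · linear_combination X 1 0 * h1
  · linear_combination X 1 1 * h1 - h2
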